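/- For every integer g ≥ 5, the set Λ = {0} ∪ {g, g+1, …, 2g−3} ∪ {n ∈ ℕ : n ≥ 2g} is a numerical semigroup with multiplicity g, conductor 2g, genus g+1, rank g−1, exactly g−2 minimal generators and no right generators, and its Eliahou constant equals E(Λ) = g² − 5g + 2, which is positive. -/
import Mathlib


/-- A numerical semigroup: a cofinite submonoid of ℕ, viewed as a set of naturals. -/
def IsNumericalSemigroup (S : Set ℕ) : Prop :=
  0 ∈ S ∧ (∀ a ∈ S, ∀ b ∈ S, a + b ∈ S) ∧ ∃ N : ℕ, ∀ n : ℕ, N ≤ n → n ∈ S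

/-- The conductor: the smallest `N` such that every `n ≥ N` belongs to `S`. -/
noncomputable def sgConductor (S : Set ℕ) : ℕ :=
  sInf {N : ℕ | ∀ n : ℕ, N ≤ n → n ∈ S}

/-- The genus: the number of gaps. -/
noncomputable def sgGenus (S : Set ℕ) : ℕ :=
  Sᶜ.ncard

/-- The rank `k(Λ) = c(Λ) - g(Λ)`. -/
noncomputable def sgRank (S : Set ℕ) : ℕ :=
  sgConductor S - sgGenus S

/-- The multiplicity: the smallest nonzero element. -/
noncomputable def sgMultiplicity (S : Set ℕ) : ℕ :=
  sInf {n : ℕ | n ∈ S ∧ n ≠ 0}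

/-- The Frobenius number: the largest gap, i.e. the conductor minus one. -/
noncomputable def sgFrobenius (S : Set ℕ) : ℕ :=
  sgConductor S - 1

/-- `sgElem S j` is the element `λ_j` of `S = {λ_0 = 0 < λ_1 < λ_2 < ⋯}`. -/
noncomputable def sgElem (S : Set ℕ) (j : ℕ) : ℕ :=
  Nat.nth (· ∈ S) j

/-- The jump `u_j = λ_{j+1} - λ_j`. -/
noncomputable def sgJump (S : Set ℕ) (j : ℕ) : ℕ :=
  sgElem S (j + 1) - sgElem S j

/-- The left elements: elements of `S` smaller than the Frobenius number. -/
def sgLeftElements (S : Set ℕ) : Set ℕ :=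
  {x : ℕ | x ∈ S ∧ x + 1 < sgConductor S}

/-- A minimal generator: a nonzero element not the sum of two nonzero elements. -/
def IsMinimalGenerator (S : Set ℕ) (x : ℕ) : Prop :=
  x ∈ S ∧ x ≠ 0 ∧ ¬ ∃ a ∈ S, ∃ b ∈ S, a ≠ 0 ∧ b ≠ 0 ∧ a + b = x

/-- A right generator: a minimal generator larger than the Frobenius number. -/
def IsRightGenerator (S : Set ℕ) (x : ℕ) : Prop :=
  IsMinimalGenerator S x ∧ sgFrobenius S < x

/-- A strong generator: a right generator `μ` such that `μ + m(Λ)` is a minimal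
generator of `Λ ∖ {μ}`. -/
noncomputable def IsStrongGenerator (S : Set ℕ) (x : ℕ) : Prop :=
  IsRightGenerator S x ∧ IsMinimalGenerator (S \ {x}) (x + sgMultiplicity S)

/-- A new generator of `Λ`: a minimal generator of `Λ` that is not a minimal
generator of `Λ ∪ {F(Λ)}`. -/
noncomputable def IsNewGenerator (S : Set ℕ) (x : ℕ) : Prop :=
  IsMinimalGenerator S x ∧ ¬ IsMinimalGenerator (S ∪ {sgFrobenius S}) x

/-- `x` (an element `λ_s ≥ c(Λ)`) is an order-`p` seed of `Λ` if
`x + λ_p ≠ λ_i + λ_j` for all `p < i ≤ j < s`, i.e. for all `i ≤ j` with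
`p < i` and `λ_j < x`. -/
noncomputable def IsSeed (S : Set ℕ) (p x : ℕ) : Prop :=
  sgConductor S ≤ x ∧ ∀ i j : ℕ, p < i → i ≤ j → sgElem S j < x →
    x + sgElem S p ≠ sgElem S i + sgElem S j

/-- `T` is a child of `S`: obtained by removing one right generator. -/
def IsChild (T S : Set ℕ) : Prop :=
  ∃ μ : ℕ, IsRightGenerator S μ ∧ T = S \ {μ}

/-- A grandchild: a child of a child. -/
def IsGrandchild (T S : Set ℕ) : Prop :=
  ∃ C : Set ℕ, IsChild C S ∧ IsChild T C

/-- A great-grandchild: a child of a grandchild. -/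
def IsGreatGrandchild (T S : Set ℕ) : Prop :=
  ∃ C : Set ℕ, IsGrandchild C S ∧ IsChild T C

/-- `⟨a,b,c,…⟩|_κ`: the smallest numerical semigroup containing a given set. -/
def sgClosure (A : Set ℕ) : Set ℕ :=
  ⋂₀ {S : Set ℕ | IsNumericalSemigroup S ∧ A ⊆ S}


theorem statement19 (g : ℕ) (hg : 5 ≤ g)
    (S : Set ℕ)
    (hSdef : S = ({0} : Set ℕ) ∪ {n : ℕ | g ≤ n ∧ n ≤ 2 * g - 3} ∪ {n : ℕ | 2 * g ≤ n})
    (p r q ρ : ℕ)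
    (hp : p = {x : ℕ | IsMinimalGenerator S x}.ncard)
    (hr : r = {x : ℕ | IsRightGenerator S x}.ncard)
    (hq : q = ⌈(sgConductor S : ℚ) / (sgMultiplicity S : ℚ)⌉₊)
    (hρ : ρ = q * sgMultiplicity S - sgConductor S) :
    IsNumericalSemigroup S ∧
    sgMultiplicity S = g ∧
    sgConductor S = 2 * g ∧
    sgGenus S = g + 1 ∧
    sgRank S = g - 1 ∧
    p = g - 2 ∧
    (¬ ∃ μ : ℕ, IsRightGenerator S μ) ∧
    ((sgRank S : ℤ) * ((p : ℤ) - (r : ℤ)) -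
      (q : ℤ) * ((sgMultiplicity S : ℤ) - (r : ℤ)) + (ρ : ℤ) =
        (g : ℤ) ^ 2 - 5 * (g : ℤ) + 2) ∧
    (0 : ℤ) < (g : ℤ) ^ 2 - 5 * (g : ℤ) + 2 := by
  
  have hmem : ∀ n : ℕ, n ∈ S ↔ (n = 0 ∨ (g ≤ n ∧ n ≤ 2 * g - 3) ∨ 2 * g ≤ n) := by
    intro n
    simp [hSdef, Set.mem_union, Set.mem_setOf_eq, Set.mem_singleton_iff]
    tauto
  -- decomposition of any x ≥ 2g as sum of two nonzero elements
  have hdecomp : ∀ x : ℕ, 2 * g ≤ x →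
      ∃ a ∈ S, ∃ b ∈ S, a ≠ 0 ∧ b ≠ 0 ∧ a + b = x := by
    intro x hx
    by_cases h : x ≤ 3 * g - 3 ∨ 3 * g ≤ x
    · exact ⟨g, (hmem g).2 (by omega), x - g, (hmem _).2 (by omega), by omega, by omega,
        by omega⟩
    · exact ⟨x - (2 * g - 3), (hmem _).2 (by omega), 2 * g - 3, (hmem _).2 (by omega),
        by omega, by omega, by omega⟩
  have hNS : IsNumericalSemigroup S := by
    refine ⟨(hmem 0).2 (by omega), ?_, ⟨2 * g, fun n hn => (hmem n).2 (by omega)⟩⟩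
    intro a ha b hb
    rw [hmem] at ha hb ⊢
    omega
  have hcond : sgConductor S = 2 * g := by
    have hset : {N : ℕ | ∀ n : ℕ, N ≤ n → n ∈ S} = Set.Ici (2 * g) := by
      ext N
      simp only [Set.mem_setOf_eq, Set.mem_Ici]
      constructor
      · intro h
        by_contra hN
        have := h (2 * g - 1) (by omega)
        rw [hmem] at this
        omega
      · intro h n hn
        exact (hmem n).2 (by omega)
    rw [sgConductor, hset, csInf_Ici]
  have hmult : sgMultiplicity S = g := by
    refine le_antisymm (Nat.sInf_le ⟨(hmem g).2 (by omega), by omega⟩) ?_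
    refine le_csInf ⟨g, ⟨(hmem g).2 (by omega), by omega⟩⟩ ?_
    intro m hm
    obtain ⟨hm1, hm2⟩ := hm
    rw [hmem] at hm1
    omega
  have hgen : sgGenus S = g + 1 := by
    have hcompl : Sᶜ = ↑(Finset.Ioo 0 g ∪ Finset.Ioo (2 * g - 3) (2 * g)) := by
      ext n
      simp only [Set.mem_compl_iff, hmem, Finset.coe_union, Set.mem_union,
        Finset.coe_Ioo, Set.mem_Ioo]
      omega
    rw [sgGenus, hcompl, Set.ncard_coe_finset,
      Finset.card_union_of_disjoint (by
        simp only [Finset.disjoint_left, Finset.mem_Ioo]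
        omega)]
    simp only [Nat.card_Ioo]
    omega
  have hrank : sgRank S = g - 1 := by
    rw [sgRank, hcond, hgen]; omega
  have hfrob : sgFrobenius S = 2 * g - 1 := by
    rw [sgFrobenius, hcond]
  have hminset : {x : ℕ | IsMinimalGenerator S x} = ↑(Finset.Ico g (2 * g - 2)) := by
    ext x
    simp only [Set.mem_setOf_eq, Finset.coe_Ico, Set.mem_Ico, IsMinimalGenerator]
    constructor
    · rintro ⟨hx, hx0, hnsum⟩
      rw [hmem] at hx
      rcases hx with h | h | h
      · omega
      · omega
      · exact absurd (hdecomp x h) hnsum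
    · intro hx
      refine ⟨(hmem x).2 (by omega), by omega, ?_⟩
      rintro ⟨a, ha, b, hb, ha0, hb0, hab⟩
      rw [hmem] at ha hb
      omega
  have hpval : p = g - 2 := by
    rw [hp, hminset, Set.ncard_coe_finset, Nat.card_Ico]; omega
  have hnoright : ¬ ∃ μ : ℕ, IsRightGenerator S μ := by
    rintro ⟨μ, ⟨hμmin, _, hnsum⟩, hμgt⟩
    rw [hfrob] at hμgt
    exact hnsum (hdecomp μ (by omega))
  have hrval : r = 0 := by
    rw [hr]
    convert Set.ncard_empty ℕ
    ext x
    simp only [Set.mem_setOf_eq, Set.mem_empty_iff_false, iff_false]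
    exact fun h => hnoright ⟨x, h⟩
  have hqval : q = 2 := by
    rw [hq, hcond, hmult]
    have hg0 : (g : ℚ) ≠ 0 := by positivity
    have : ((2 * g : ℕ) : ℚ) / (g : ℚ) = 2 := by
      push_cast
      field_simp
    rw [this]
    simp
  have hρval : ρ = 0 := by
    rw [hρ, hqval, hmult, hcond]; omega
  have hgZ : (5 : ℤ) ≤ (g : ℤ) := by exact_mod_cast hg
  refine ⟨hNS, hmult, hcond, hgen, hrank, hpval, hnoright, ?_, by nlinarith⟩
  rw [hrank, hpval, hrval, hqval, hρval, hmult]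
  have h1 : ((g - 1 : ℕ) : ℤ) = (g : ℤ) - 1 := by omega
  have h2 : ((g - 2 : ℕ) : ℤ) = (g : ℤ) - 2 := by omega
  rw [h1, h2]
  push_cast
  ring
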